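/- arXiv:2201.06142 — 2 statements merged into one kernel-verified Lean document; each statement's English description precedes it below -/
import Mathlib

section
/- Let Σ_F ∈ ℝ^{d×d} be positive definite and Σ_T ∈ ℝ^{d×d} positive semidefinite. Define the risk of a representation Λ ∈ ℝ^{d×R} as risk(Λ, Σ_T, Σ_F) = E_{β,X,ε}[(β̂_Λ − β)ᵀ Σ_F (β̂_Λ − β)] + σ², where β ~ N(0, Σ_T), rows of X are i.i.d. N(0, Σ_F), y = Xβ + ε, and β̂_Λ = Λ(XΛ)^† y. Then for every Λ, risk(Σ_F^{−1/2} Λ, Σ_T, Σ_F) = risk(Λ, Σ_F^{1/2} Σ_T Σ_F^{1/2}, I). -/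
set_option maxHeartbeats 2000000


open Matrix MeasureTheory ProbabilityTheory
open scoped NNReal

/-- `P` is the Moore–Penrose pseudoinverse of `A`. -/
def IsMoorePenrose {m n : Type*} [Fintype m] [Fintype n]
    (A : Matrix m n ℝ) (P : Matrix n m ℝ) : Prop :=
  A * P * A = A ∧ P * A * P = P ∧ (A * P)ᵀ = A * P ∧ (P * A)ᵀ = P * A

/-- The few-shot risk of the representation `Λ`, where the task vector is
`β = ST z` (`z` standard Gaussian, so `β ~ N(0, ST ST)`), the rows of `X` are
i.i.d. `N(0, SF SF)` (row `i` of `X` is `SF zᵢ`, encoded as `X = Z * SF` for `SF`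
symmetric), `y = Xβ + ε` with `ε ~ N(0, σ²)` i.i.d., and
`β̂ = Λ (XΛ)† y` is the weighted minimum-norm interpolator.
`risk = E[(β̂ − β)ᵀ (SF SF) (β̂ − β)] + σ²`. -/
noncomputable def metaRisk (d n R : ℕ)
    (pinv : Matrix (Fin n) (Fin R) ℝ → Matrix (Fin R) (Fin n) ℝ)
    (Λ : Matrix (Fin d) (Fin R) ℝ) (ST SF : Matrix (Fin d) (Fin d) ℝ)
    (σ : ℝ≥0) : ℝ :=
  (∫ ω : (Fin d → ℝ) × (Fin n → Fin d → ℝ) × (Fin n → ℝ),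
      (let β : Fin d → ℝ := ST.mulVec ω.1
       let X : Matrix (Fin n) (Fin d) ℝ := Matrix.of ω.2.1 * SF
       let y : Fin n → ℝ := X.mulVec β + ω.2.2
       let βhat : Fin d → ℝ := Λ.mulVec ((pinv (X * Λ)).mulVec y)
       (βhat - β) ⬝ᵥ (SF * SF).mulVec (βhat - β))
    ∂((Measure.pi fun _ : Fin d => gaussianReal 0 1).prod
       ((Measure.pi fun _ : Fin n => Measure.pi fun _ : Fin d => gaussianReal 0 1).prod
        (Measure.pi fun _ : Fin n => gaussianReal 0 (σ ^ 2)))))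
  + (σ : ℝ) ^ 2


open scoped ENNReal
open Real

lemma dot_mulVec_self {m : ℕ} (M : Matrix (Fin m) (Fin m) ℝ) (x : Fin m → ℝ) :
    (M.mulVec x) ⬝ᵥ (M.mulVec x) = x ⬝ᵥ (Mᵀ * M).mulVec x := by
  conv_rhs => rw [← Matrix.mulVec_mulVec, Matrix.dotProduct_mulVec, Matrix.vecMul_transpose]

lemma exists_orthogonal_factor {m : ℕ} (B C : Matrix (Fin m) (Fin m) ℝ)
    (h : Bᵀ * B = Cᵀ * C) :
    ∃ Q : Matrix (Fin m) (Fin m) ℝ, Qᵀ * Q = 1 ∧ B = Q * C := by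
  classical
  set V := EuclideanSpace ℝ (Fin m)
  let b : V →ₗ[ℝ] V :=
    { toFun := fun x => WithLp.toLp 2 (B.mulVec x)
      map_add' := fun x y => congrArg (WithLp.toLp 2) (Matrix.mulVec_add B x y)
      map_smul' := fun r x => congrArg (WithLp.toLp 2) (Matrix.mulVec_smul B r x) }
  let c : V →ₗ[ℝ] V :=
    { toFun := fun x => WithLp.toLp 2 (C.mulVec x)
      map_add' := fun x y => congrArg (WithLp.toLp 2) (Matrix.mulVec_add C x y)
      map_smul' := fun r x => congrArg (WithLp.toLp 2) (Matrix.mulVec_smul C r x) }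
  have hdot : ∀ x : V, (B.mulVec x) ⬝ᵥ (B.mulVec x) = (C.mulVec x) ⬝ᵥ (C.mulVec x) := by
    intro x
    rw [dot_mulVec_self, dot_mulVec_self, h]
  have hnormsq : ∀ v : V, ‖v‖ = Real.sqrt ((v : Fin m → ℝ) ⬝ᵥ (v : Fin m → ℝ)) := by
    intro v
    rw [EuclideanSpace.norm_eq]
    congr 1
    simp [dotProduct, pow_two]
  have hnorm : ∀ x : V, ‖b x‖ = ‖c x‖ := by
    intro x
    rw [hnormsq, hnormsq]
    exact congrArg Real.sqrt (hdot x)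
  have hker : LinearMap.ker c ≤ LinearMap.ker b := by
    intro x hx
    rw [LinearMap.mem_ker] at hx ⊢
    have h0 : ‖b x‖ = 0 := by rw [hnorm x, hx, norm_zero]
    exact norm_eq_zero.mp h0
  let f₁ : (V ⧸ LinearMap.ker c) →ₗ[ℝ] V := (LinearMap.ker c).liftQ b hker
  let e₁ := c.quotKerEquivRange
  let L₀ : LinearMap.range c →ₗ[ℝ] V := f₁ ∘ₗ (e₁.symm : LinearMap.range c →ₗ[ℝ] _)
  have hL₀ : ∀ x : V, L₀ ⟨c x, LinearMap.mem_range_self c x⟩ = b x := by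
    intro x
    have h1 : e₁.symm ⟨c x, LinearMap.mem_range_self c x⟩ = Submodule.Quotient.mk x :=
      c.quotKerEquivRange_symm_apply_image x (LinearMap.mem_range_self c x)
    simp only [L₀, LinearMap.comp_apply, LinearEquiv.coe_coe, h1, f₁, Submodule.liftQ_apply]
  have hL₀norm : ∀ v : LinearMap.range c, ‖L₀ v‖ = ‖v‖ := by
    rintro ⟨v, x, rfl⟩
    rw [hL₀ x]
    show ‖b x‖ = ‖c x‖
    exact hnorm x
  let L : LinearMap.range c →ₗᵢ[ℝ] V := ⟨L₀, hL₀norm⟩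
  let Lext := L.extend
  have hLb : ∀ x : V, Lext (c x) = b x := by
    intro x
    have := L.extend_apply ⟨c x, LinearMap.mem_range_self c x⟩
    rw [← hL₀ x]
    exact this
  let q : (Fin m → ℝ) →ₗ[ℝ] (Fin m → ℝ) :=
    { toFun := fun x => (Lext (WithLp.toLp 2 x)).ofLp
      map_add' := fun x y => congrArg WithLp.ofLp (Lext.map_add (WithLp.toLp 2 x) (WithLp.toLp 2 y))
      map_smul' := fun r x => congrArg WithLp.ofLp (Lext.map_smul r (WithLp.toLp 2 x)) }
  refine ⟨LinearMap.toMatrix' q, ?_, ?_⟩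
  · -- orthogonality
    have hinner : ∀ x y : V, (Lext x : Fin m → ℝ) ⬝ᵥ (Lext y : Fin m → ℝ) = (x : Fin m → ℝ) ⬝ᵥ y := by
      intro x y
      have h2 := Lext.inner_map_map x y
      rw [EuclideanSpace.inner_eq_star_dotProduct, EuclideanSpace.inner_eq_star_dotProduct, star_trivial,
        star_trivial] at h2
      rw [dotProduct_comm, dotProduct_comm (x : Fin m → ℝ)]
      exact h2
    have hmv : ∀ x : Fin m → ℝ, (LinearMap.toMatrix' q).mulVec x = q x := by
      intro x
      rw [← Matrix.toLin'_apply, Matrix.toLin'_toMatrix']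
    have key : ∀ y : Fin m → ℝ, ((LinearMap.toMatrix' q)ᵀ * LinearMap.toMatrix' q).mulVec y = y := by
      intro y
      funext i
      have h1 : ∀ x : Fin m → ℝ, x ⬝ᵥ ((LinearMap.toMatrix' q)ᵀ * LinearMap.toMatrix' q).mulVec y
          = x ⬝ᵥ y := by
        intro x
        rw [← Matrix.mulVec_mulVec, Matrix.dotProduct_mulVec, Matrix.vecMul_transpose, hmv, hmv]
        exact hinner (WithLp.toLp 2 x) (WithLp.toLp 2 y)
      have := h1 (Pi.single i 1)
      simpa [single_dotProduct] using this
    apply Matrix.toLin'.injective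
    apply LinearMap.ext
    intro y
    simp only [Matrix.toLin'_apply, key, Matrix.toLin'_one, LinearMap.id_apply]
  · -- B = Q * C
    apply Matrix.toLin'.injective
    apply LinearMap.ext
    intro x
    rw [Matrix.toLin'_apply, Matrix.toLin'_apply, ← Matrix.mulVec_mulVec]
    have : (LinearMap.toMatrix' q).mulVec (C.mulVec x) = q (C.mulVec x) := by
      rw [← Matrix.toLin'_apply, Matrix.toLin'_toMatrix']
    rw [this]
    exact congrArg WithLp.ofLp (hLb (WithLp.toLp 2 x)).symm

lemma lintegral_pi_fin_prod : ∀ {m : ℕ} (f : Fin m → ℝ → ℝ≥0∞), (∀ i, Measurable (f i)) →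
    ∫⁻ z : Fin m → ℝ, ∏ i, f i (z i) ∂(Measure.pi fun _ => (volume : Measure ℝ))
      = ∏ i, ∫⁻ t, f i t ∂volume := by
  intro m
  induction m with
  | zero =>
    intro f hf
    simp only [Finset.univ_eq_empty, Finset.prod_empty, lintegral_one]
    rw [Measure.pi_univ]
    simp
  | succ m ih =>
    intro f hf
    have hmp := (measurePreserving_piFinSuccAbove (fun _ : Fin (m + 1) => (volume : Measure ℝ)) 0).symm
    rw [← hmp.map_eq, lintegral_map_equiv]
    have heq : ∀ p : ℝ × (Fin m → ℝ),
        (∏ i, f i (((MeasurableEquiv.piFinSuccAbove (fun _ => ℝ) 0).symm p) i))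
          = f 0 p.1 * ∏ j : Fin m, f j.succ (p.2 j) := by
      intro p
      rw [Fin.prod_univ_succ]
      simp [MeasurableEquiv.piFinSuccAbove_symm_apply, Fin.insertNthEquiv, Fin.insertNth_zero,
        Fin.zero_succAbove]
    simp_rw [heq]
    rw [lintegral_prod_mul (f := fun t => f 0 t) (g := fun y : Fin m → ℝ => ∏ j : Fin m, f j.succ (y j))
      (hf 0).aemeasurable
      (Finset.measurable_prod Finset.univ fun (j : Fin m) _ =>
        (hf j.succ).comp (measurable_pi_apply j)).aemeasurable]
    rw [ih (fun j => f j.succ) (fun j => hf j.succ), Fin.prod_univ_succ]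

lemma pi_gaussian_eq_withDensity (m : ℕ) :
    (Measure.pi fun _ : Fin m => gaussianReal 0 1)
      = (volume : Measure (Fin m → ℝ)).withDensity (fun z => ∏ i, gaussianPDF 0 1 (z i)) := by
  refine Measure.pi_eq fun s hs => ?_
  rw [withDensity_apply _ (MeasurableSet.univ_pi hs)]
  have h1 : ∀ z : Fin m → ℝ, (Set.univ.pi s).indicator (fun z => ∏ i, gaussianPDF 0 1 (z i)) z
      = ∏ i, (s i).indicator (gaussianPDF 0 1) (z i) := by
    intro z
    by_cases hz : z ∈ Set.univ.pi s
    · rw [Set.indicator_of_mem hz]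
      exact Finset.prod_congr rfl fun i _ =>
        (Set.indicator_of_mem (hz i (Set.mem_univ i)) _).symm
    · rw [Set.indicator_of_notMem hz]
      rw [Set.mem_pi] at hz
      push_neg at hz
      obtain ⟨i, -, hi⟩ := hz
      exact (Finset.prod_eq_zero (Finset.mem_univ i) (Set.indicator_of_notMem hi _)).symm
  rw [← lintegral_indicator (MeasurableSet.univ_pi hs)]
  simp_rw [h1]
  rw [MeasureTheory.volume_pi, lintegral_pi_fin_prod
    (fun i => (s i).indicator (gaussianPDF 0 1))
    (fun i => Measurable.indicator ((measurable_gaussianPDFReal 0 1).ennreal_ofReal) (hs i))]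
  refine Finset.prod_congr rfl fun i _ => ?_
  rw [lintegral_indicator (hs i), ← gaussianReal_apply 0 one_ne_zero (s i)]

lemma map_withDensity_equiv {α β : Type*} [MeasurableSpace α] [MeasurableSpace β]
    (e : α ≃ᵐ β) (μ : Measure α) (g : α → ℝ≥0∞) (hg : Measurable g) :
    Measure.map e (μ.withDensity g) = (Measure.map e μ).withDensity (g ∘ e.symm) := by
  ext s hs
  rw [Measure.map_apply e.measurable hs, withDensity_apply _ (e.measurable hs),
    withDensity_apply _ hs,
    setLIntegral_map hs (hg.comp e.symm.measurable) e.measurable]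
  refine setLIntegral_congr_fun (e.measurable hs) (fun x _ => ?_)
  simp

lemma prod_gaussianPDF (m : ℕ) (v : Fin m → ℝ) :
    (∏ i, gaussianPDF 0 1 (v i))
      = ENNReal.ofReal ((Real.sqrt (2 * π))⁻¹ ^ m * Real.exp (-(∑ i, v i ^ 2) / 2)) := by
  have hpdf : ∀ t : ℝ, gaussianPDFReal 0 1 t = (Real.sqrt (2 * π))⁻¹ * Real.exp (-(t ^ 2) / 2) := by
    intro t
    simp [gaussianPDFReal]
  simp_rw [gaussianPDF, hpdf]
  rw [← ENNReal.ofReal_prod_of_nonneg (fun i _ =>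
    mul_nonneg (inv_nonneg.mpr (Real.sqrt_nonneg _)) (Real.exp_pos _).le)]
  congr 1
  rw [Finset.prod_mul_distrib, Finset.prod_const, Finset.card_univ, Fintype.card_fin,
    ← Real.exp_sum]
  congr 1
  rw [← Finset.sum_div, ← Finset.sum_neg_distrib]

/-- The measurable equivalence of `Fin m → ℝ` given by an invertible matrix. -/
noncomputable def mulVecEquiv {m : ℕ} (Q : Matrix (Fin m) (Fin m) ℝ) (hQ : IsUnit Q.det) :
    (Fin m → ℝ) ≃ᵐ (Fin m → ℝ) where
  toFun := Q.mulVec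
  invFun := Q⁻¹.mulVec
  left_inv := fun x => by
    rw [Matrix.mulVec_mulVec, Matrix.nonsing_inv_mul _ hQ, Matrix.one_mulVec]
  right_inv := fun x => by
    rw [Matrix.mulVec_mulVec, Matrix.mul_nonsing_inv _ hQ, Matrix.one_mulVec]
  measurable_toFun := Q.mulVecLin.continuous_of_finiteDimensional.measurable
  measurable_invFun := Q⁻¹.mulVecLin.continuous_of_finiteDimensional.measurable

lemma sum_sq_mulVec_orth {m : ℕ} {Q : Matrix (Fin m) (Fin m) ℝ} (hQ : Qᵀ * Q = 1)
    (z : Fin m → ℝ) : ∑ i, (Q.mulVec z) i ^ 2 = ∑ i, z i ^ 2 := by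
  have h1 : ∀ v : Fin m → ℝ, ∑ i, v i ^ 2 = v ⬝ᵥ v := by
    intro v; simp [dotProduct, pow_two]
  rw [h1, h1]
  calc (Q.mulVec z) ⬝ᵥ (Q.mulVec z) = z ⬝ᵥ (Qᵀ * Q).mulVec z := by
        conv_rhs => rw [← Matrix.mulVec_mulVec, Matrix.dotProduct_mulVec, Matrix.vecMul_transpose]
    _ = z ⬝ᵥ z := by rw [hQ, Matrix.one_mulVec]

lemma map_mulVec_pi_gaussian {m : ℕ} (Q : Matrix (Fin m) (Fin m) ℝ) (hQ : Qᵀ * Q = 1) :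
    Measure.map Q.mulVec (Measure.pi fun _ : Fin m => gaussianReal 0 1)
      = Measure.pi fun _ : Fin m => gaussianReal 0 1 := by
  have hdet2 : Q.det * Q.det = 1 := by
    have := congrArg Matrix.det hQ
    rwa [Matrix.det_mul, Matrix.det_transpose, Matrix.det_one] at this
  have hdet : IsUnit Q.det := IsUnit.of_mul_eq_one _ hdet2
  have habs : |Q.det| = 1 := by
    rcases mul_self_eq_one_iff.mp hdet2 with h | h
    · rw [h, abs_one]
    · rw [h]; simp
  have hQQt : Q * Qᵀ = 1 := mul_eq_one_comm.mp hQ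
  have hQinv : Q⁻¹ = Qᵀ := Matrix.inv_eq_left_inv hQ
  set G : (Fin m → ℝ) → ℝ≥0∞ := fun z => ∏ i, gaussianPDF 0 1 (z i) with hG
  have hGmeas : Measurable G :=
    Finset.measurable_prod Finset.univ fun i _ =>
      ((measurable_gaussianPDFReal 0 1).ennreal_ofReal).comp (measurable_pi_apply i)
  have hcoe : Q.mulVec = ⇑(mulVecEquiv Q hdet) := rfl
  rw [pi_gaussian_eq_withDensity, hcoe, map_withDensity_equiv _ _ _ hGmeas]
  have hmapvol : Measure.map (⇑(mulVecEquiv Q hdet)) (volume : Measure (Fin m → ℝ)) = volume := by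
    have : ⇑(mulVecEquiv Q hdet) = ⇑(Matrix.toLin' Q) := by
      funext x
      rw [Matrix.toLin'_apply]
      rfl
    rw [this, Real.map_matrix_volume_pi_eq_smul_volume_pi hdet.ne_zero]
    rw [abs_inv, habs, inv_one, ENNReal.ofReal_one, one_smul]
  rw [hmapvol]
  have hGcomp : G ∘ ⇑(mulVecEquiv Q hdet).symm = G := by
    funext z
    have hsymm : (mulVecEquiv Q hdet).symm z = Q⁻¹.mulVec z := rfl
    have hQt : Qᵀᵀ * Qᵀ = 1 := by rw [Matrix.transpose_transpose]; exact hQQt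
    simp only [Function.comp_apply, hsymm, hQinv, hG]
    rw [prod_gaussianPDF, prod_gaussianPDF, sum_sq_mulVec_orth hQt]
  rw [hGcomp, ← pi_gaussian_eq_withDensity]

set_option maxHeartbeats 2000000 in
lemma integral_eq_of_comp_equiv {α : Type*} [MeasurableSpace α] (μ : Measure α)
    (e : α ≃ᵐ α) (hmap : Measure.map e μ = μ) (f g : α → ℝ)
    (h : ∀ ω, f ω = g (e ω)) : ∫ ω, f ω ∂μ = ∫ ω, g ω ∂μ := by
  calc ∫ ω, f ω ∂μ = ∫ ω, g (e ω) ∂μ := integral_congr_ae (Filter.Eventually.of_forall h)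
    _ = ∫ ω, g ω ∂(Measure.map e μ) := (MeasureTheory.integral_map_equiv e g).symm
    _ = ∫ ω, g ω ∂μ := by rw [hmap]

/-- Invariance of the few-shot risk under whitening: with `Σ_F = SF²` positive
definite, `Σ_T = ST²` positive semidefinite, and `C` a positive semidefinite
square root of the canonical task covariance `Σ̃_T = Σ_F^{1/2} Σ_T Σ_F^{1/2} = SF (ST ST) SF`,
one has `risk(Σ_F^{−1/2} Λ, Σ_T, Σ_F) = risk(Λ, Σ̃_T, I)`. -/
theorem risk_whitening_invariance
    {d n R : ℕ}
    (pinv : Matrix (Fin n) (Fin R) ℝ → Matrix (Fin R) (Fin n) ℝ)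
    (hpinv : ∀ A, IsMoorePenrose A (pinv A))
    (Λ : Matrix (Fin d) (Fin R) ℝ)
    (SF ST C : Matrix (Fin d) (Fin d) ℝ)
    (hSF : SF.PosDef) (hSFsym : SFᵀ = SF)
    (hST : (ST * ST).PosSemidef) (hSTsym : STᵀ = ST)
    (hC : C.PosSemidef) (hCsym : Cᵀ = C)
    (hCsq : C * C = SF * (ST * ST) * SF)
    (σ : ℝ≥0) :
    metaRisk d n R pinv (SF⁻¹ * Λ) ST SF σ = metaRisk d n R pinv Λ C 1 σ := by
  have hSFdet : IsUnit SF.det := isUnit_iff_ne_zero.mpr hSF.det_pos.ne'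
  -- orthogonal factor
  obtain ⟨Q, hQ, hB⟩ := exists_orthogonal_factor (ST * SF) C (by
    rw [Matrix.transpose_mul, hSFsym, hSTsym, hCsym, hCsq]
    simp only [Matrix.mul_assoc])
  set Q₀ := Qᵀ with hQ₀def
  have hQQt : Q * Qᵀ = 1 := mul_eq_one_comm.mp hQ
  have hQ₀ : Q₀ᵀ * Q₀ = 1 := by rw [hQ₀def, Matrix.transpose_transpose]; exact hQQt
  have hfac : SF * ST = C * Q₀ := by
    have h1 : (ST * SF)ᵀ = SF * ST := by rw [Matrix.transpose_mul, hSFsym, hSTsym]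
    have h2 : (Q * C)ᵀ = C * Q₀ := by rw [Matrix.transpose_mul, hCsym, hQ₀def]
    rw [← h1, hB, h2]
  have hdet₀ : IsUnit Q₀.det := by
    refine IsUnit.of_mul_eq_one Q₀.det ?_
    have := congrArg Matrix.det hQ₀
    rwa [Matrix.det_mul, Matrix.det_transpose, Matrix.det_one] at this
  have hQ₀coe : ⇑(mulVecEquiv Q₀ hdet₀) = Q₀.mulVec := rfl
  -- the measurable equivalence on the sample space
  set ν := ((Measure.pi fun _ : Fin n => Measure.pi fun _ : Fin d => gaussianReal 0 1).prod
        (Measure.pi fun _ : Fin n => gaussianReal 0 (σ ^ 2)))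
  set μ₁ := (Measure.pi fun _ : Fin d => gaussianReal 0 1)
  set e := MeasurableEquiv.prodCongr (mulVecEquiv Q₀ hdet₀)
    (MeasurableEquiv.refl ((Fin n → Fin d → ℝ) × (Fin n → ℝ))) with he_def
  have hmp : MeasurePreserving (⇑e) (μ₁.prod ν) (μ₁.prod ν) := by
    have h1 : MeasurePreserving (⇑(mulVecEquiv Q₀ hdet₀)) μ₁ μ₁ :=
      ⟨(mulVecEquiv Q₀ hdet₀).measurable, by rw [hQ₀coe]; exact map_mulVec_pi_gaussian Q₀ hQ₀⟩
    have h2 : MeasurePreserving (fun x : (Fin n → Fin d → ℝ) × (Fin n → ℝ) => x) ν ν :=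
      MeasurePreserving.id ν
    exact h1.prod h2
  unfold metaRisk
  congr 1
  refine integral_eq_of_comp_equiv _ e hmp.map_eq _ _ ?_
  rintro ⟨z, Z, ε⟩
  have he : e (z, Z, ε) = (Q₀.mulVec z, Z, ε) := rfl
  rw [he]
  dsimp only
  have h1 : Matrix.of Z * SF * (SF⁻¹ * Λ) = Matrix.of Z * Λ := by
    rw [Matrix.mul_assoc, ← Matrix.mul_assoc SF, Matrix.mul_nonsing_inv _ hSFdet,
      Matrix.one_mul]
  have h2 : (Matrix.of Z * SF).mulVec (ST.mulVec z)
      = (Matrix.of Z).mulVec ((SF * ST).mulVec z) := by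
    rw [Matrix.mulVec_mulVec, Matrix.mulVec_mulVec, Matrix.mul_assoc]
  have h3 : C.mulVec (Q₀.mulVec z) = (SF * ST).mulVec z := by
    rw [Matrix.mulVec_mulVec, ← hfac]
  rw [h1, h2, h3]
  simp only [Matrix.mul_one, one_mul, Matrix.one_mulVec]
  set v : Fin R → ℝ := (pinv (Matrix.of Z * Λ)).mulVec
    ((Matrix.of Z).mulVec ((SF * ST).mulVec z) + ε) with hv
  have h4 : (SF⁻¹ * Λ).mulVec v = SF⁻¹.mulVec (Λ.mulVec v) :=
    (Matrix.mulVec_mulVec v SF⁻¹ Λ).symm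
  rw [h4]
  have key : ∀ a : Fin d → ℝ,
      (SF⁻¹.mulVec a - ST.mulVec z) ⬝ᵥ (SF * SF).mulVec (SF⁻¹.mulVec a - ST.mulVec z)
        = (a - (SF * ST).mulVec z) ⬝ᵥ (a - (SF * ST).mulVec z) := by
    intro a
    have hSFu : SF.mulVec (SF⁻¹.mulVec a - ST.mulVec z) = a - (SF * ST).mulVec z := by
      rw [Matrix.mulVec_sub, Matrix.mulVec_mulVec a SF SF⁻¹, Matrix.mulVec_mulVec z SF ST,
        Matrix.mul_nonsing_inv _ hSFdet, Matrix.one_mulVec]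
    calc (SF⁻¹.mulVec a - ST.mulVec z) ⬝ᵥ (SF * SF).mulVec (SF⁻¹.mulVec a - ST.mulVec z)
        = (SF⁻¹.mulVec a - ST.mulVec z) ⬝ᵥ (SFᵀ * SF).mulVec (SF⁻¹.mulVec a - ST.mulVec z) := by
          rw [hSFsym]
      _ = (SF.mulVec (SF⁻¹.mulVec a - ST.mulVec z)) ⬝ᵥ
            (SF.mulVec (SF⁻¹.mulVec a - ST.mulVec z)) :=
          (dot_mulVec_self SF _).symm
      _ = (a - (SF * ST).mulVec z) ⬝ᵥ (a - (SF * ST).mulVec z) := by rw [hSFu]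
  exact key (Λ.mulVec v)
end

section
/- Let A, Â be symmetric d×d matrices with ‖Â − A‖ ≤ Δ (operator norm), and suppose λ_r(A) − λ_{r+1}(A) > Δ, where λ_k denotes the k-th largest eigenvalue. Let W and Ŵ be the subspaces spanned by the top r eigenvectors of A and Â respectively. Then sin∠(W, Ŵ) ≤ Δ / (λ_r(A) − λ_{r+1}(A) − Δ). -/
open Matrix

set_option synthInstance.maxHeartbeats 1000000
set_option maxHeartbeats 4000000

/-- The `ℓ₂ → ℓ₂` operator (spectral) norm of a real square matrix. -/
noncomputable def opNorm {d : ℕ} (M : Matrix (Fin d) (Fin d) ℝ) : ℝ :=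
  ‖Matrix.toEuclideanCLM (𝕜 := ℝ) M‖

namespace DK
variable {d : ℕ}

lemma real_transpose_eq_star (M : Matrix (Fin d) (Fin d) ℝ) : Mᵀ = star M := rfl

lemma opNorm_nonneg' (M : Matrix (Fin d) (Fin d) ℝ) : 0 ≤ opNorm M := norm_nonneg _

lemma opNorm_neg (M : Matrix (Fin d) (Fin d) ℝ) : opNorm (-M) = opNorm M := by
  rw [opNorm, opNorm, map_neg, norm_neg]

lemma equiv_norm_sq (x : Fin d → ℝ) :
    ‖(WithLp.equiv 2 (Fin d → ℝ)).symm x‖ ^ 2 = x ⬝ᵥ x := by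
  rw [EuclideanSpace.norm_eq, Real.sq_sqrt (by positivity)]
  simp [dotProduct, sq]

lemma mulVec_dot_le (M : Matrix (Fin d) (Fin d) ℝ) (x : Fin d → ℝ) :
    (M *ᵥ x) ⬝ᵥ (M *ᵥ x) ≤ opNorm M ^ 2 * (x ⬝ᵥ x) := by
  have h := (Matrix.toEuclideanCLM (𝕜 := ℝ) M).le_opNorm ((WithLp.equiv 2 (Fin d → ℝ)).symm x)
  rw [show (Matrix.toEuclideanCLM (𝕜 := ℝ) M) ((WithLp.equiv 2 (Fin d → ℝ)).symm x) = (WithLp.equiv 2 (Fin d → ℝ)).symm (M *ᵥ x) from rfl] at h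
  have h2 := pow_le_pow_left₀ (norm_nonneg _) h 2
  rw [mul_pow, equiv_norm_sq, equiv_norm_sq] at h2
  exact h2

lemma opNorm_le_of_sq (M : Matrix (Fin d) (Fin d) ℝ) (c : ℝ) (hc : 0 ≤ c)
    (h : ∀ x : Fin d → ℝ, (M *ᵥ x) ⬝ᵥ (M *ᵥ x) ≤ c ^ 2 * (x ⬝ᵥ x)) : opNorm M ≤ c := by
  apply ContinuousLinearMap.opNorm_le_bound _ hc
  intro y
  have hy : y = (WithLp.equiv 2 (Fin d → ℝ)).symm (WithLp.equiv 2 (Fin d → ℝ) y) := rfl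
  set x := WithLp.equiv 2 (Fin d → ℝ) y with hx
  rw [hy, show (Matrix.toEuclideanCLM (𝕜 := ℝ) M) ((WithLp.equiv 2 (Fin d → ℝ)).symm x) = (WithLp.equiv 2 (Fin d → ℝ)).symm (M *ᵥ x) from rfl]
  have h1 : ‖(WithLp.equiv 2 (Fin d → ℝ)).symm (M *ᵥ x)‖ ^ 2
      ≤ (c * ‖(WithLp.equiv 2 (Fin d → ℝ)).symm x‖) ^ 2 := by
    rw [mul_pow, equiv_norm_sq, equiv_norm_sq]
    exact h x
  nlinarith [norm_nonneg ((WithLp.equiv 2 (Fin d → ℝ)).symm (M *ᵥ x)),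
    mul_nonneg hc (norm_nonneg ((WithLp.equiv 2 (Fin d → ℝ)).symm x))]

lemma opNorm_transpose (M : Matrix (Fin d) (Fin d) ℝ) : opNorm Mᵀ = opNorm M := by
  rw [real_transpose_eq_star, opNorm, opNorm, map_star, ContinuousLinearMap.star_eq_adjoint]
  exact (ContinuousLinearMap.adjoint (𝕜 := ℝ)).norm_map _

lemma dot_mulVec_left (M : Matrix (Fin d) (Fin d) ℝ) (x y : Fin d → ℝ) :
    (M *ᵥ x) ⬝ᵥ y = x ⬝ᵥ (Mᵀ *ᵥ y) := by
  rw [Matrix.dotProduct_mulVec, Matrix.vecMul_transpose]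

lemma dot_nonneg (x : Fin d → ℝ) : 0 ≤ x ⬝ᵥ x := by
  apply Finset.sum_nonneg; intro i _; exact mul_self_nonneg _

lemma dot_pos {x : Fin d → ℝ} (hx : x ≠ 0) : 0 < x ⬝ᵥ x := by
  rcases (dot_nonneg x).lt_or_eq with h | h
  · exact h
  · exfalso
    apply hx
    funext i
    have h2 : ∑ j, x j * x j = 0 := h.symm
    have h3 := Finset.sum_eq_zero_iff_of_nonneg (fun j _ => mul_self_nonneg (x j)) |>.mp h2 i
      (Finset.mem_univ i)
    exact mul_self_eq_zero.mp h3

lemma bilin_le (M : Matrix (Fin d) (Fin d) ℝ) (x y : Fin d → ℝ)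
    (hx : x ⬝ᵥ x = 1) (hy : y ⬝ᵥ y = 1) : |y ⬝ᵥ (M *ᵥ x)| ≤ opNorm M := by
  have cs : (y ⬝ᵥ (M *ᵥ x)) ^ 2 ≤ (y ⬝ᵥ y) * ((M *ᵥ x) ⬝ᵥ (M *ᵥ x)) := by
    have := Finset.sum_mul_sq_le_sq_mul_sq Finset.univ y (M *ᵥ x)
    simpa [dotProduct, sq, Finset.mul_sum] using this
  rw [hy, one_mul] at cs
  have hz := mulVec_dot_le M x
  rw [hx, mul_one] at hz
  rw [abs_le]
  constructor <;> nlinarith [cs, hz, opNorm_nonneg' M]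

lemma bilin_self_le (M : Matrix (Fin d) (Fin d) ℝ) (Δ : ℝ) (hΔ : opNorm M ≤ Δ)
    (x : Fin d → ℝ) : x ⬝ᵥ (M *ᵥ x) ≤ Δ * (x ⬝ᵥ x) := by
  have cs : (x ⬝ᵥ (M *ᵥ x)) ^ 2 ≤ (x ⬝ᵥ x) * ((M *ᵥ x) ⬝ᵥ (M *ᵥ x)) := by
    have := Finset.sum_mul_sq_le_sq_mul_sq Finset.univ x (M *ᵥ x)
    simpa [dotProduct, sq, Finset.mul_sum] using this
  have hm := mulVec_dot_le M x
  have h0 := opNorm_nonneg' M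
  have hΔ0 : 0 ≤ Δ := le_trans h0 hΔ
  have hxx := dot_nonneg x
  have hp : opNorm M ^ 2 ≤ Δ ^ 2 := pow_le_pow_left₀ h0 hΔ 2
  have hb : (M *ᵥ x) ⬝ᵥ (M *ᵥ x) ≤ Δ ^ 2 * (x ⬝ᵥ x) :=
    le_trans hm (mul_le_mul_of_nonneg_right hp hxx)
  have habs : |x ⬝ᵥ (M *ᵥ x)| ≤ Δ * (x ⬝ᵥ x) := by
    rw [← Real.sqrt_sq (mul_nonneg hΔ0 hxx), ← Real.sqrt_sq_eq_abs]
    apply Real.sqrt_le_sqrt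
    nlinarith [cs, mul_le_mul_of_nonneg_left hb hxx]
  linarith [le_abs_self (x ⬝ᵥ (M *ᵥ x))]

/-- quadratic form of a conjugated diagonal matrix -/
lemma conj_quad (U : Matrix (Fin d) (Fin d) ℝ) (μ : Fin d → ℝ) (x : Fin d → ℝ) :
    x ⬝ᵥ ((U * diagonal μ * Uᵀ) *ᵥ x) = (Uᵀ *ᵥ x) ⬝ᵥ (diagonal μ *ᵥ (Uᵀ *ᵥ x)) := by
  rw [← mulVec_mulVec, ← mulVec_mulVec, dot_mulVec_left Uᵀ, Matrix.transpose_transpose]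

lemma diag_quad_le (μ : Fin d → ℝ) (b : Fin d → ℝ) (t : ℝ) (h : ∀ i, μ i ≤ t ∨ b i = 0) :
    b ⬝ᵥ (diagonal μ *ᵥ b) ≤ t * (b ⬝ᵥ b) := by
  have hthis : b ⬝ᵥ (diagonal μ *ᵥ b) = ∑ i, μ i * (b i * b i) := by
    simp [dotProduct, mulVec, diagonal]
    congr 1; funext i; ring
  rw [hthis, dotProduct, Finset.mul_sum]
  apply Finset.sum_le_sum
  intro i _
  rcases h i with h1 | h1
  · nlinarith [mul_self_nonneg (b i)]
  · simp [h1]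

lemma diag_quad_ge (μ : Fin d → ℝ) (b : Fin d → ℝ) (t : ℝ) (h : ∀ i, t ≤ μ i ∨ b i = 0) :
    t * (b ⬝ᵥ b) ≤ b ⬝ᵥ (diagonal μ *ᵥ b) := by
  have hthis : b ⬝ᵥ (diagonal μ *ᵥ b) = ∑ i, μ i * (b i * b i) := by
    simp [dotProduct, mulVec, diagonal]
    congr 1; funext i; ring
  rw [hthis, dotProduct, Finset.mul_sum]
  apply Finset.sum_le_sum
  intro i _
  rcases h i with h1 | h1
  · nlinarith [mul_self_nonneg (b i)]
  · simp [h1]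

lemma exists_pair (C : Matrix (Fin d) (Fin d) ℝ) (hC : 0 < opNorm C) :
    ∃ z w : Fin d → ℝ, z ⬝ᵥ z = 1 ∧ w ⬝ᵥ w = 1 ∧
      C *ᵥ z = opNorm C • w ∧ Cᵀ *ᵥ w = opNorm C • z := by
  have hd : 0 < d := by
    by_contra hd
    have h0 : d = 0 := by omega
    subst h0
    have : C = 0 := Subsingleton.elim _ _
    rw [this] at hC
    simp [opNorm] at hC
  have h : (Cᵀ * C).IsHermitian := by simpa using Matrix.isHermitian_conjTranspose_mul_self C
  set W : Matrix (Fin d) (Fin d) ℝ := (h.eigenvectorUnitary : Matrix (Fin d) (Fin d) ℝ) with hW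
  set e : Fin d → ℝ := h.eigenvalues with he
  have spec : Cᵀ * C = W * diagonal e * Wᵀ := by have hs := h.spectral_theorem; simp at hs; exact hs
  have WtW : Wᵀ * W = 1 := by
    rw [real_transpose_eq_star]; exact Unitary.coe_star_mul_self h.eigenvectorUnitary
  have WWt : W * Wᵀ = 1 := mul_eq_one_comm.mp WtW
  haveI : Nonempty (Fin d) := ⟨⟨0, hd⟩⟩
  obtain ⟨i₀, -, hmax⟩ := Finset.exists_max_image Finset.univ e Finset.univ_nonempty
  set lam := e i₀ with hlam
  set z : Fin d → ℝ := W *ᵥ Pi.single i₀ 1 with hz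
  have hz1 : z ⬝ᵥ z = 1 := by
    rw [hz, dot_mulVec_left, mulVec_mulVec, WtW, one_mulVec]
    simp [dotProduct, Pi.single_apply]
  have hGz : (Cᵀ * C) *ᵥ z = lam • z := by
    rw [spec, hz, mulVec_mulVec, Matrix.mul_assoc (W * diagonal e) Wᵀ W, WtW,
      Matrix.mul_one, ← mulVec_mulVec]
    have : diagonal e *ᵥ (Pi.single i₀ 1 : Fin d → ℝ) = lam • (Pi.single i₀ 1 : Fin d → ℝ) := by
      funext j
      by_cases hj : j = i₀ <;> simp [mulVec, dotProduct, diagonal, Pi.single_apply, hj, hlam]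
    rw [this, Matrix.mulVec_smul]
  have key : ∀ x : Fin d → ℝ, (C *ᵥ x) ⬝ᵥ (C *ᵥ x) ≤ lam * (x ⬝ᵥ x) := by
    intro x
    have h1 : (C *ᵥ x) ⬝ᵥ (C *ᵥ x) = x ⬝ᵥ ((Cᵀ * C) *ᵥ x) := by
      rw [dot_mulVec_left, mulVec_mulVec]
    set y : Fin d → ℝ := Wᵀ *ᵥ x with hy
    have h2 : x ⬝ᵥ ((Cᵀ * C) *ᵥ x) = y ⬝ᵥ (diagonal e *ᵥ y) := by
      rw [spec, ← mulVec_mulVec, ← mulVec_mulVec, dot_mulVec_left Wᵀ, Matrix.transpose_transpose]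
    have hyy : y ⬝ᵥ y = x ⬝ᵥ x := by
      rw [hy, dot_mulVec_left, mulVec_mulVec, Matrix.transpose_transpose, WWt, one_mulVec]
    have h3 : y ⬝ᵥ (diagonal e *ᵥ y) ≤ lam * (y ⬝ᵥ y) :=
      diag_quad_le e y lam (fun i => Or.inl (hmax i (Finset.mem_univ i)))
    rw [h1, h2, ← hyy]
    exact h3
  have hlz : (C *ᵥ z) ⬝ᵥ (C *ᵥ z) = lam := by
    rw [dot_mulVec_left, mulVec_mulVec, hGz]
    rw [dotProduct_smul, hz1]; simp
  have hlam0 : 0 ≤ lam := by rw [← hlz]; exact dot_nonneg _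
  have hle : opNorm C ≤ Real.sqrt lam := by
    apply opNorm_le_of_sq _ _ (Real.sqrt_nonneg _)
    intro x
    rw [Real.sq_sqrt hlam0]
    exact key x
  have hge : Real.sqrt lam ≤ opNorm C := by
    have := mulVec_dot_le C z
    rw [hz1, mul_one, hlz] at this
    calc Real.sqrt lam ≤ Real.sqrt (opNorm C ^ 2) := Real.sqrt_le_sqrt this
    _ = opNorm C := Real.sqrt_sq (opNorm_nonneg' C)
  have hσ : opNorm C = Real.sqrt lam := le_antisymm hle hge
  set σ := opNorm C with hσdef
  have hσsq : σ ^ 2 = lam := by rw [hσ]; exact Real.sq_sqrt hlam0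
  have hσne : σ ≠ 0 := ne_of_gt hC
  refine ⟨z, σ⁻¹ • (C *ᵥ z), hz1, ?_, ?_, ?_⟩
  · rw [smul_dotProduct, dotProduct_smul, hlz, ← hσsq]
    rw [smul_eq_mul, smul_eq_mul, ← mul_assoc, ← sq, ← mul_pow, inv_mul_cancel₀ hσne, one_pow]
  · rw [smul_smul, mul_inv_cancel₀ hσne, one_smul]
  · rw [Matrix.mulVec_smul, mulVec_mulVec, hGz, ← hσsq, smul_smul, sq,
      inv_mul_cancel_left₀ hσne]

/-- Weyl's inequality for the k-th sorted eigenvalue. -/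
lemma weyl (U V : Matrix (Fin d) (Fin d) ℝ) (μ ν : Fin d → ℝ) (Δ : ℝ)
    (hU : Uᵀ * U = 1) (hV : Vᵀ * V = 1)
    (hμ : ∀ i j : Fin d, i ≤ j → μ j ≤ μ i)
    (hν : ∀ i j : Fin d, i ≤ j → ν j ≤ ν i)
    (hΔ : opNorm (V * diagonal ν * Vᵀ - U * diagonal μ * Uᵀ) ≤ Δ)
    (k : Fin d) : ν k ≤ μ k + Δ := by
  classical
  set L : (Fin d → ℝ) →ₗ[ℝ] ({i : Fin d // i ≠ k} → ℝ) :=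
    { toFun := fun x i => if (i : Fin d) < k then (Uᵀ *ᵥ x) i else (Vᵀ *ᵥ x) i
      map_add' := by
        intro a b; funext i; by_cases h : (i : Fin d) < k <;>
          simp [h, Matrix.mulVec_add]
      map_smul' := by
        intro m a; funext i; by_cases h : (i : Fin d) < k <;>
          simp [h, Matrix.mulVec_smul] } with hL
  have hd0 : 0 < d := k.pos
  have hrange : Module.finrank ℝ (LinearMap.range L) ≤ d - 1 := by
    have h1 : Module.finrank ℝ (LinearMap.range L)
        ≤ Module.finrank ℝ ({i : Fin d // i ≠ k} → ℝ) := Submodule.finrank_le _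
    have h2 : Module.finrank ℝ ({i : Fin d // i ≠ k} → ℝ) = d - 1 := by
      rw [Module.finrank_pi ℝ]
      simp [Fintype.card_subtype_compl]
    rw [h2] at h1
    exact h1
  have hker : ∃ x : Fin d → ℝ, x ≠ 0 ∧ L x = 0 := by
    have hrn := LinearMap.finrank_range_add_finrank_ker L
    have hdom : Module.finrank ℝ (Fin d → ℝ) = d := by
      rw [Module.finrank_pi ℝ]; simp
    rw [hdom] at hrn
    have hpos : 0 < Module.finrank ℝ (LinearMap.ker L) := by omega
    have hnebot : LinearMap.ker L ≠ ⊥ := by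
      intro hbot
      rw [hbot] at hpos
      simp at hpos
    obtain ⟨x, hx, hne⟩ := Submodule.exists_mem_ne_zero_of_ne_bot hnebot
    exact ⟨x, hne, hx⟩
  obtain ⟨x, hx0, hxker⟩ := hker
  set b := Uᵀ *ᵥ x with hb
  set c := Vᵀ *ᵥ x with hc
  have hbzero : ∀ j : Fin d, j < k → b j = 0 := by
    intro j hj
    have := congrFun hxker ⟨j, by exact ne_of_lt hj⟩
    simpa [hL, hj] using this
  have hczero : ∀ i : Fin d, k < i → c i = 0 := by
    intro i hi
    have := congrFun hxker ⟨i, by exact ne_of_gt hi⟩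
    simpa [hL, not_lt_of_gt hi, asymm hi] using this
  have hbb : b ⬝ᵥ b = x ⬝ᵥ x := by
    rw [hb, dot_mulVec_left, mulVec_mulVec, Matrix.transpose_transpose,
      mul_eq_one_comm.mp hU, one_mulVec]
  have hcc : c ⬝ᵥ c = x ⬝ᵥ x := by
    rw [hc, dot_mulVec_left, mulVec_mulVec, Matrix.transpose_transpose,
      mul_eq_one_comm.mp hV, one_mulVec]
  have hAx : x ⬝ᵥ ((U * diagonal μ * Uᵀ) *ᵥ x) ≤ μ k * (x ⬝ᵥ x) := by
    rw [conj_quad, ← hb, ← hbb]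
    apply diag_quad_le
    intro i
    by_cases h : i < k
    · exact Or.inr (hbzero i h)
    · exact Or.inl (hμ k i (le_of_not_gt h))
  have hAhx : ν k * (x ⬝ᵥ x) ≤ x ⬝ᵥ ((V * diagonal ν * Vᵀ) *ᵥ x) := by
    rw [conj_quad, ← hc, ← hcc]
    apply diag_quad_ge
    intro i
    by_cases h : k < i
    · exact Or.inr (hczero i h)
    · exact Or.inl (hν i k (le_of_not_gt h))
  have hE := bilin_self_le _ Δ hΔ x
  rw [Matrix.sub_mulVec, dotProduct_sub] at hE
  have hpos := dot_pos hx0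
  have hfin : ν k * (x ⬝ᵥ x) ≤ (μ k + Δ) * (x ⬝ᵥ x) := by nlinarith
  exact le_of_mul_le_mul_right (by linarith [hfin]) hpos

lemma absorb {U : Matrix (Fin d) (Fin d) ℝ} (hU : Uᵀ * U = 1) (X : Matrix (Fin d) (Fin d) ℝ) :
    Uᵀ * (U * X) = X := by rw [← Matrix.mul_assoc, hU, Matrix.one_mul]

lemma conj_mul {U : Matrix (Fin d) (Fin d) ℝ} (hU : Uᵀ * U = 1)
    (M N : Matrix (Fin d) (Fin d) ℝ) : (U * M * Uᵀ) * (U * N * Uᵀ) = U * (M * N) * Uᵀ := by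
  simp only [Matrix.mul_assoc]
  rw [absorb hU]

lemma conj_transpose_self (U M : Matrix (Fin d) (Fin d) ℝ) (hM : Mᵀ = M) :
    (U * M * Uᵀ)ᵀ = U * M * Uᵀ := by
  rw [Matrix.transpose_mul, Matrix.transpose_mul, Matrix.transpose_transpose, hM,
    Matrix.mul_assoc]

lemma dot_mulVec_sym {M : Matrix (Fin d) (Fin d) ℝ} (hM : Mᵀ = M) (x y : Fin d → ℝ) :
    x ⬝ᵥ (M *ᵥ y) = (M *ᵥ x) ⬝ᵥ y := by rw [dot_mulVec_left, hM]

end DK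

open DK

/-- Davis–Kahan sin-theta theorem: let `A, Â` be symmetric with eigen-decompositions
`A = U diag(μ) Uᵀ`, `Â = V diag(ν) Vᵀ` (`U, V` orthogonal, eigenvalues sorted in
decreasing order), `‖Â − A‖ ≤ Δ` in operator norm, and suppose the eigengap
`λ_r(A) − λ_{r+1}(A) > Δ`. Then the sine of the largest principal angle between the
top-`r` eigenspaces, `‖P_W − P_Ŵ‖`, is at most `Δ / (λ_r(A) − λ_{r+1}(A) − Δ)`. -/
theorem davis_kahan_sin_theta
    {d r : ℕ} (hr0 : 0 < r) (hr : r < d)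
    (A Ahat U V : Matrix (Fin d) (Fin d) ℝ)
    (μ ν : Fin d → ℝ) (Δ : ℝ)
    (hU : Uᵀ * U = 1) (hV : Vᵀ * V = 1)
    (hA : A = U * Matrix.diagonal μ * Uᵀ)
    (hAhat : Ahat = V * Matrix.diagonal ν * Vᵀ)
    (hμ : ∀ i j : Fin d, i ≤ j → μ j ≤ μ i)
    (hν : ∀ i j : Fin d, i ≤ j → ν j ≤ ν i)
    (hΔ : opNorm (Ahat - A) ≤ Δ)
    (hgap : Δ < μ ⟨r - 1, by omega⟩ - μ ⟨r, hr⟩) :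
    opNorm
        (U * Matrix.diagonal (fun i : Fin d => if (i : ℕ) < r then (1 : ℝ) else 0) * Uᵀ -
         V * Matrix.diagonal (fun i : Fin d => if (i : ℕ) < r then (1 : ℝ) else 0) * Vᵀ) ≤
      Δ / (μ ⟨r - 1, by omega⟩ - μ ⟨r, hr⟩ - Δ) := by
  classical
  set ind : Fin d → ℝ := fun i : Fin d => if (i : ℕ) < r then (1 : ℝ) else 0 with hind
  set D : Matrix (Fin d) (Fin d) ℝ := Matrix.diagonal ind with hD
  set P : Matrix (Fin d) (Fin d) ℝ := U * D * Uᵀ with hP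
  set Q : Matrix (Fin d) (Fin d) ℝ := V * D * Vᵀ with hQ
  set kr1 : Fin d := ⟨r - 1, by omega⟩ with hkr1
  set kr : Fin d := ⟨r, hr⟩ with hkr
  set α : ℝ := μ kr1 with hα
  set β : ℝ := μ kr with hβ
  set E : Matrix (Fin d) (Fin d) ℝ := Ahat - A with hE
  have hΔ0 : 0 ≤ Δ := le_trans (opNorm_nonneg' E) hΔ
  have hgpos : 0 < α - β - Δ := by simp only [hα, hβ]; linarith
  -- basic algebra
  have hDD : D * D = D := by
    rw [hD, Matrix.diagonal_mul_diagonal]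
    exact congrArg Matrix.diagonal (by funext i; by_cases h : (i : ℕ) < r <;> simp [hind, h])
  have hDt : Dᵀ = D := by rw [hD, Matrix.diagonal_transpose]
  have hPt : Pᵀ = P := conj_transpose_self U D hDt
  have hQt : Qᵀ = Q := conj_transpose_self V D hDt
  have hPP : P * P = P := by rw [hP, conj_mul hU, hDD]
  have hQQ : Q * Q = Q := by rw [hQ, conj_mul hV, hDD]
  have hAP : A * P = P * A := by
    rw [hA, hP, conj_mul hU, conj_mul hU, Matrix.diagonal_mul_diagonal,
      Matrix.diagonal_mul_diagonal]
    congr 2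
    exact congrArg Matrix.diagonal (by funext i; ring)
  have hAhQ : Ahat * Q = Q * Ahat := by
    rw [hAhat, hQ, conj_mul hV, conj_mul hV, Matrix.diagonal_mul_diagonal,
      Matrix.diagonal_mul_diagonal]
    congr 2
    exact congrArg Matrix.diagonal (by funext i; ring)
  -- Weyl inequalities
  have weyl1 : ν kr ≤ β + Δ := by
    have := weyl U V μ ν Δ hU hV hμ hν (by rw [← hA, ← hAhat]; exact hΔ) kr
    simpa [hβ] using this
  have weyl2 : α - Δ ≤ ν kr1 := by
    have := weyl V U ν μ Δ hV hU hν hμ (by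
      rw [← hA, ← hAhat]
      rw [show A - Ahat = -(Ahat - A) from (neg_sub Ahat A).symm, opNorm_neg]
      exact hΔ) kr1
    simp only [← hα] at this
    linarith
  -- Fin order facts
  have hile : ∀ i : Fin d, (i : ℕ) < r → i ≤ kr1 := by
    intro i hi
    rw [Fin.le_def]
    simp only [hkr1]
    omega
  have hkrle : ∀ i : Fin d, ¬ ((i : ℕ) < r) → kr ≤ i := by
    intro i hi
    rw [Fin.le_def]
    simp only [hkr]
    omega
  -- support lemmas for vectors in the ranges
  have hsupp1 : ∀ (W : Matrix (Fin d) (Fin d) ℝ), Wᵀ * W = 1 → ∀ z : Fin d → ℝ,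
      (W * D * Wᵀ) *ᵥ z = z → ∀ i : Fin d, ¬ ((i : ℕ) < r) → (Wᵀ *ᵥ z) i = 0 := by
    intro W hW z hz i hi
    have h1 : Wᵀ * (W * D * Wᵀ) = D * Wᵀ := by
      rw [← Matrix.mul_assoc, ← Matrix.mul_assoc, hW, Matrix.one_mul]
    have h2 : D *ᵥ (Wᵀ *ᵥ z) = Wᵀ *ᵥ z := by
      rw [mulVec_mulVec, ← h1, ← mulVec_mulVec, hz]
    have h3 := congrFun h2 i
    simpa [hD, mulVec, diagonal, dotProduct, hind, hi] using h3.symm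
  have hsupp0 : ∀ (W : Matrix (Fin d) (Fin d) ℝ), Wᵀ * W = 1 → ∀ w : Fin d → ℝ,
      (W * D * Wᵀ) *ᵥ w = 0 → ∀ i : Fin d, (i : ℕ) < r → (Wᵀ *ᵥ w) i = 0 := by
    intro W hW w hw i hi
    have h1 : Wᵀ * (W * D * Wᵀ) = D * Wᵀ := by
      rw [← Matrix.mul_assoc, ← Matrix.mul_assoc, hW, Matrix.one_mul]
    have h2 : D *ᵥ (Wᵀ *ᵥ w) = 0 := by
      rw [mulVec_mulVec, ← h1, ← mulVec_mulVec, hw, Matrix.mulVec_zero]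
    have h3 := congrFun h2 i
    simpa [hD, mulVec, diagonal, dotProduct, hind, hi] using h3
  -- norm preservation of coordinates
  have hcoord : ∀ (W : Matrix (Fin d) (Fin d) ℝ), Wᵀ * W = 1 → ∀ z : Fin d → ℝ,
      (Wᵀ *ᵥ z) ⬝ᵥ (Wᵀ *ᵥ z) = z ⬝ᵥ z := by
    intro W hW z
    rw [dot_mulVec_left, mulVec_mulVec, Matrix.transpose_transpose,
      mul_eq_one_comm.mp hW, one_mulVec]
  -- quadratic form bounds
  have hquad_zAz : ∀ z : Fin d → ℝ, P *ᵥ z = z → α * (z ⬝ᵥ z) ≤ z ⬝ᵥ (A *ᵥ z) := by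
    intro z hz
    rw [hA, conj_quad, ← hcoord U hU z]
    apply diag_quad_ge
    intro i
    by_cases hi : (i : ℕ) < r
    · exact Or.inl (hμ i kr1 (hile i hi))
    · exact Or.inr (hsupp1 U hU z hz i hi)
  have hquad_wAw : ∀ w : Fin d → ℝ, P *ᵥ w = 0 → w ⬝ᵥ (A *ᵥ w) ≤ β * (w ⬝ᵥ w) := by
    intro w hw
    rw [hA, conj_quad, ← hcoord U hU w]
    apply diag_quad_le
    intro i
    by_cases hi : (i : ℕ) < r
    · exact Or.inr (hsupp0 U hU w hw i hi)
    · exact Or.inl (hμ kr i (hkrle i hi))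
  have hquad_zAhz : ∀ z : Fin d → ℝ, Q *ᵥ z = z → ν kr1 * (z ⬝ᵥ z) ≤ z ⬝ᵥ (Ahat *ᵥ z) := by
    intro z hz
    rw [hAhat, conj_quad, ← hcoord V hV z]
    apply diag_quad_ge
    intro i
    by_cases hi : (i : ℕ) < r
    · exact Or.inl (hν i kr1 (hile i hi))
    · exact Or.inr (hsupp1 V hV z hz i hi)
  have hquad_wAhw : ∀ w : Fin d → ℝ, Q *ᵥ w = 0 → w ⬝ᵥ (Ahat *ᵥ w) ≤ ν kr * (w ⬝ᵥ w) := by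
    intro w hw
    rw [hAhat, conj_quad, ← hcoord V hV w]
    apply diag_quad_le
    intro i
    by_cases hi : (i : ℕ) < r
    · exact Or.inr (hsupp0 V hV w hw i hi)
    · exact Or.inl (hν kr i (hkrle i hi))
  -- transposes of 1 - Q, 1 - P
  have h1Qt : (1 - Q)ᵀ = 1 - Q := by rw [Matrix.transpose_sub, Matrix.transpose_one, hQt]
  have h1Pt : (1 - P)ᵀ = 1 - P := by rw [Matrix.transpose_sub, Matrix.transpose_one, hPt]
  set C1 : Matrix (Fin d) (Fin d) ℝ := (1 - Q) * P with hC1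
  set C2 : Matrix (Fin d) (Fin d) ℝ := (1 - P) * Q with hC2
  have hC1t : C1ᵀ = P * (1 - Q) := by rw [hC1, Matrix.transpose_mul, h1Qt, hPt]
  have hC2t : C2ᵀ = Q * (1 - P) := by rw [hC2, Matrix.transpose_mul, h1Pt, hQt]
  -- first block bound
  have hσ1 : opNorm C1 * (α - β - Δ) ≤ Δ := by
    rcases eq_or_lt_of_le (opNorm_nonneg' C1) with h0 | hpos
    · rw [← h0, zero_mul]; exact hΔ0
    obtain ⟨z, w, hz1, hw1, hCz, hCtw⟩ := exists_pair C1 hpos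
    set σ : ℝ := opNorm C1 with hσ
    have hσ0 : 0 ≤ σ := le_of_lt hpos
    have hσne : σ ≠ 0 := ne_of_gt hpos
    have hPz : P *ᵥ z = z := by
      have h1 : P * C1ᵀ = C1ᵀ := by rw [hC1t, ← Matrix.mul_assoc, hPP]
      have h2 : P *ᵥ (C1ᵀ *ᵥ w) = C1ᵀ *ᵥ w := by rw [mulVec_mulVec, h1]
      rw [hCtw, Matrix.mulVec_smul] at h2
      exact smul_right_injective (Fin d → ℝ) hσne h2
    have hQw : Q *ᵥ w = 0 := by
      have h1 : Q * C1 = 0 := by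
        rw [hC1, ← Matrix.mul_assoc, Matrix.mul_sub, Matrix.mul_one, hQQ, sub_self,
          Matrix.zero_mul]
      have h2 : Q *ᵥ (C1 *ᵥ z) = 0 := by rw [mulVec_mulVec, h1, Matrix.zero_mulVec]
      rw [hCz, Matrix.mulVec_smul] at h2
      exact (smul_eq_zero.mp h2).resolve_left hσne
    have hPw : P *ᵥ w = σ • z := by
      have hw' : (1 - Q) *ᵥ w = w := by
        rw [Matrix.sub_mulVec, Matrix.one_mulVec, hQw, sub_zero]
      calc P *ᵥ w = P *ᵥ ((1 - Q) *ᵥ w) := by rw [hw']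
      _ = C1ᵀ *ᵥ w := by rw [mulVec_mulVec, ← hC1t]
      _ = σ • z := hCtw
    have hzQ : z = Q *ᵥ z + σ • w := by
      have h1 : C1 *ᵥ z = z - Q *ᵥ z := by
        rw [hC1, ← mulVec_mulVec, hPz, Matrix.sub_mulVec, Matrix.one_mulVec]
      rw [hCz, eq_sub_iff_add_eq] at h1
      rw [add_comm] at h1
      exact h1.symm
    have hzAz : α ≤ z ⬝ᵥ (A *ᵥ z) := by
      have := hquad_zAz z hPz
      rwa [hz1, mul_one] at this
    have hwAhw : w ⬝ᵥ (Ahat *ᵥ w) ≤ ν kr := by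
      have := hquad_wAhw w hQw
      rwa [hw1, mul_one] at this
    have hAhz : w ⬝ᵥ (Ahat *ᵥ z) = σ * (w ⬝ᵥ (Ahat *ᵥ w)) := by
      conv_lhs => rw [hzQ]
      rw [Matrix.mulVec_add, Matrix.mulVec_smul, dotProduct_add, dotProduct_smul]
      have h1 : w ⬝ᵥ (Ahat *ᵥ (Q *ᵥ z)) = 0 := by
        rw [mulVec_mulVec, hAhQ, ← mulVec_mulVec, dot_mulVec_sym hQt, hQw, zero_dotProduct]
      rw [h1, zero_add, smul_eq_mul]
    have hAz : w ⬝ᵥ (A *ᵥ z) = σ * (z ⬝ᵥ (A *ᵥ z)) := by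
      conv_lhs => rw [← hPz]
      rw [mulVec_mulVec, hAP, ← mulVec_mulVec, dot_mulVec_sym hPt, hPw, smul_dotProduct,
        smul_eq_mul]
    have hEb := bilin_le E z w hz1 hw1
    have hcomb : w ⬝ᵥ (E *ᵥ z) = w ⬝ᵥ (Ahat *ᵥ z) - w ⬝ᵥ (A *ᵥ z) := by
      rw [hE, Matrix.sub_mulVec, dotProduct_sub]
    have habs := (abs_le.mp hEb).1
    have h5 : σ * (α - ν kr) ≤ Δ := by nlinarith [hzAz, hwAhw, hAhz, hAz, hcomb, habs, hΔ]
    nlinarith [h5, weyl1, hσ0]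
  -- second block bound
  have hσ2 : opNorm C2 * (α - β - Δ) ≤ Δ := by
    rcases eq_or_lt_of_le (opNorm_nonneg' C2) with h0 | hpos
    · rw [← h0, zero_mul]; exact hΔ0
    obtain ⟨z, w, hz1, hw1, hCz, hCtw⟩ := exists_pair C2 hpos
    set σ : ℝ := opNorm C2 with hσ
    have hσ0 : 0 ≤ σ := le_of_lt hpos
    have hσne : σ ≠ 0 := ne_of_gt hpos
    have hQz : Q *ᵥ z = z := by
      have h1 : Q * C2ᵀ = C2ᵀ := by rw [hC2t, ← Matrix.mul_assoc, hQQ]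
      have h2 : Q *ᵥ (C2ᵀ *ᵥ w) = C2ᵀ *ᵥ w := by rw [mulVec_mulVec, h1]
      rw [hCtw, Matrix.mulVec_smul] at h2
      exact smul_right_injective (Fin d → ℝ) hσne h2
    have hPw : P *ᵥ w = 0 := by
      have h1 : P * C2 = 0 := by
        rw [hC2, ← Matrix.mul_assoc, Matrix.mul_sub, Matrix.mul_one, hPP, sub_self,
          Matrix.zero_mul]
      have h2 : P *ᵥ (C2 *ᵥ z) = 0 := by rw [mulVec_mulVec, h1, Matrix.zero_mulVec]
      rw [hCz, Matrix.mulVec_smul] at h2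
      exact (smul_eq_zero.mp h2).resolve_left hσne
    have hQw : Q *ᵥ w = σ • z := by
      have hw' : (1 - P) *ᵥ w = w := by
        rw [Matrix.sub_mulVec, Matrix.one_mulVec, hPw, sub_zero]
      calc Q *ᵥ w = Q *ᵥ ((1 - P) *ᵥ w) := by rw [hw']
      _ = C2ᵀ *ᵥ w := by rw [mulVec_mulVec, ← hC2t]
      _ = σ • z := hCtw
    have hzP : z = P *ᵥ z + σ • w := by
      have h1 : C2 *ᵥ z = z - P *ᵥ z := by
        rw [hC2, ← mulVec_mulVec, hQz, Matrix.sub_mulVec, Matrix.one_mulVec]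
      rw [hCz, eq_sub_iff_add_eq] at h1
      rw [add_comm] at h1
      exact h1.symm
    have hzAhz : ν kr1 ≤ z ⬝ᵥ (Ahat *ᵥ z) := by
      have := hquad_zAhz z hQz
      rwa [hz1, mul_one] at this
    have hwAw : w ⬝ᵥ (A *ᵥ w) ≤ β := by
      have := hquad_wAw w hPw
      rwa [hw1, mul_one] at this
    have hAhz : w ⬝ᵥ (Ahat *ᵥ z) = σ * (z ⬝ᵥ (Ahat *ᵥ z)) := by
      conv_lhs => rw [← hQz]
      rw [mulVec_mulVec, hAhQ, ← mulVec_mulVec, dot_mulVec_sym hQt, hQw, smul_dotProduct,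
        smul_eq_mul]
    have hAz : w ⬝ᵥ (A *ᵥ z) = σ * (w ⬝ᵥ (A *ᵥ w)) := by
      conv_lhs => rw [hzP]
      rw [Matrix.mulVec_add, Matrix.mulVec_smul, dotProduct_add, dotProduct_smul]
      have h1 : w ⬝ᵥ (A *ᵥ (P *ᵥ z)) = 0 := by
        rw [mulVec_mulVec, hAP, ← mulVec_mulVec, dot_mulVec_sym hPt, hPw, zero_dotProduct]
      rw [h1, zero_add, smul_eq_mul]
    have hEb := bilin_le E z w hz1 hw1
    have hcomb : w ⬝ᵥ (E *ᵥ z) = w ⬝ᵥ (Ahat *ᵥ z) - w ⬝ᵥ (A *ᵥ z) := by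
      rw [hE, Matrix.sub_mulVec, dotProduct_sub]
    have habs := (abs_le.mp hEb).2
    have h5 : σ * (ν kr1 - β) ≤ Δ := by nlinarith [hzAhz, hwAw, hAhz, hAz, hcomb, habs, hΔ]
    nlinarith [h5, weyl2, hσ0]
  -- combine
  set c : ℝ := Δ / (α - β - Δ) with hc
  have hc0 : 0 ≤ c := div_nonneg hΔ0 (le_of_lt hgpos)
  have hσ1' : opNorm C1 ≤ c := by rw [hc, le_div_iff₀ hgpos]; exact hσ1
  have hσ2' : opNorm C2 ≤ c := by rw [hc, le_div_iff₀ hgpos]; exact hσ2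
  have hfinal : opNorm (P - Q) ≤ c := by
    apply opNorm_le_of_sq _ _ hc0
    intro x
    set y1 : Fin d → ℝ := (1 - Q) *ᵥ x with hy1
    set y2 : Fin d → ℝ := Q *ᵥ x with hy2
    have hy12 : y1 ⬝ᵥ y2 = 0 := by
      rw [hy1, dot_mulVec_left, h1Qt, hy2, mulVec_mulVec]
      have h1 : (1 - Q) * Q = 0 := by
        rw [Matrix.sub_mul, Matrix.one_mul, hQQ, sub_self]
      rw [h1, Matrix.zero_mulVec, dotProduct_zero]
    have hx12 : x = y1 + y2 := by
      rw [hy1, hy2, Matrix.sub_mulVec, Matrix.one_mulVec, sub_add_cancel]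
    have hxx : x ⬝ᵥ x = y1 ⬝ᵥ y1 + y2 ⬝ᵥ y2 := by
      conv_lhs => rw [hx12]
      rw [add_dotProduct, dotProduct_add, dotProduct_add, hy12, dotProduct_comm y2 y1, hy12]
      ring
    set u : Fin d → ℝ := (P * (1 - Q)) *ᵥ x with hu
    set v : Fin d → ℝ := ((1 - P) * Q) *ᵥ x with hv
    have hPQx : (P - Q) *ᵥ x = u - v := by
      have hdecomp : P - Q = P * (1 - Q) - (1 - P) * Q := by
        rw [Matrix.mul_sub, Matrix.sub_mul, Matrix.mul_one, Matrix.one_mul]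
        abel
      rw [hdecomp, Matrix.sub_mulVec, ← hu, ← hv]
    have h1Q1Q : (1 - Q) * (1 - Q) = 1 - Q := by
      rw [Matrix.sub_mul, Matrix.one_mul, Matrix.mul_sub, Matrix.mul_one, hQQ, sub_self,
        sub_zero]
    have huC : u = C1ᵀ *ᵥ y1 := by
      rw [hu, hy1, mulVec_mulVec, hC1t, Matrix.mul_assoc P (1 - Q) (1 - Q), h1Q1Q]
    have hvC : v = C2 *ᵥ y2 := by
      rw [hv, hy2, mulVec_mulVec, hC2, Matrix.mul_assoc (1 - P) Q Q, hQQ]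
    have hub : u ⬝ᵥ u ≤ opNorm C1 ^ 2 * (y1 ⬝ᵥ y1) := by
      rw [huC]
      have := mulVec_dot_le C1ᵀ y1
      rwa [opNorm_transpose] at this
    have hvb : v ⬝ᵥ v ≤ opNorm C2 ^ 2 * (y2 ⬝ᵥ y2) := by
      rw [hvC]; exact mulVec_dot_le C2 y2
    have huv : u ⬝ᵥ v = 0 := by
      have hu' : u = P *ᵥ ((1 - Q) *ᵥ x) := by rw [hu, ← mulVec_mulVec]
      have hv' : v = (1 - P) *ᵥ y2 := by rw [hv, ← mulVec_mulVec, hy2]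
      rw [hu', hv', dot_mulVec_left, hPt, mulVec_mulVec]
      have h1 : P * (1 - P) = 0 := by rw [Matrix.mul_sub, Matrix.mul_one, hPP, sub_self]
      rw [h1, Matrix.zero_mulVec, dotProduct_zero]
    rw [hPQx]
    have hexp : (u - v) ⬝ᵥ (u - v) = u ⬝ᵥ u + v ⬝ᵥ v := by
      rw [sub_dotProduct, dotProduct_sub, dotProduct_sub, huv, dotProduct_comm v u, huv]
      ring
    rw [hexp, hxx]
    have hp1 : opNorm C1 ^ 2 ≤ c ^ 2 := pow_le_pow_left₀ (opNorm_nonneg' C1) hσ1' 2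
    have hp2 : opNorm C2 ^ 2 ≤ c ^ 2 := pow_le_pow_left₀ (opNorm_nonneg' C2) hσ2' 2
    nlinarith [hub, hvb, dot_nonneg y1, dot_nonneg y2, hp1, hp2]
  show opNorm (P - Q) ≤ c
  exact hfinal
end
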